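/- For a prime p > 11, let U_p = { Tr_{F_{p²}/F_p}(β) : β ∈ F_{p²}, N_{F_{p²}/F_p}(β) = 1 } ⊆ F_p be the set of traces of norm-one elements of the quadratic extension of F_p. Then U_p + U_p = F_p. -/

import Mathlib

open Polynomial

theorem memU_of_not (p : ℕ) [Fact p.Prime] (hp : 11 < p) (t : ZMod p)
    (h : ∀ z : ZMod p, z ≠ 0 → z + z⁻¹ ≠ t) :
    ∃ β : GaloisField p 2,
      Algebra.norm (ZMod p) β = 1 ∧ Algebra.trace (ZMod p) (GaloisField p 2) β = t := by
  haveI : Fintype (GaloisField p 2) := Fintype.ofFinite _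
  have hfr : Module.finrank (ZMod p) (GaloisField p 2) = 2 := GaloisField.finrank p (by norm_num)
  have hcard : Fintype.card (GaloisField p 2) = p ^ 2 := by
    rw [Module.card_eq_pow_finrank (K := ZMod p), ZMod.card, hfr]
  have hchar : ringChar (GaloisField p 2) = p := ringChar.eq _ p
  have hinj : Function.Injective (algebraMap (ZMod p) (GaloisField p 2)) :=
    (algebraMap (ZMod p) (GaloisField p 2)).injective
  have hodd : p % 2 = 1 := by
    rcases (Fact.out (p := p.Prime)).eq_two_or_odd with h2 | h2
    · omega
    · exact h2
  -- square root of the discriminant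
  have hsq : IsSquare ((algebraMap (ZMod p) (GaloisField p 2)) (t ^ 2 - 4)) := by
    by_cases hd : t ^ 2 - 4 = 0
    · exact ⟨0, by simp [hd]⟩
    · rw [FiniteField.isSquare_iff (by rw [hchar]; omega) (by simpa using hinj.ne hd)]
      rw [← map_pow]
      obtain ⟨k, hk⟩ : ∃ k, p = 2 * k + 1 := ⟨p / 2, by omega⟩
      have hm : p ^ 2 = 4 * (k * k) + 4 * k + 1 := by subst hk; ring
      have he : Fintype.card (GaloisField p 2) / 2 = (p - 1) * ((p + 1) / 2) := by
        rw [hcard]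
        calc p ^ 2 / 2 = 2 * (k * k) + 2 * k := by omega
        _ = (2 * k) * (k + 1) := by ring
        _ = (p - 1) * ((p + 1) / 2) := by
            rw [show p - 1 = 2 * k by omega, show (p+1)/2 = k+1 by omega]
      rw [he, pow_mul, ZMod.pow_card_sub_one_eq_one hd, one_pow, map_one]
  obtain ⟨r, hr⟩ := hsq
  obtain ⟨T, hT⟩ : ∃ T, T = algebraMap (ZMod p) (GaloisField p 2) t := ⟨_, rfl⟩
  have hr' : r ^ 2 = T ^ 2 - 4 := by
    rw [pow_two, ← hr, hT, map_sub, map_pow, map_ofNat]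
  have h2K : (2 : GaloisField p 2) ≠ 0 := by
    have h2p : ((2 : ZMod p)) ≠ 0 := by
      have : ((2 : ℕ) : ZMod p) ≠ 0 := by
        rw [Ne, ZMod.natCast_eq_zero_iff]
        exact fun hdvd => by have := Nat.le_of_dvd (by norm_num) hdvd; omega
      simpa using this
    simpa [map_ofNat] using hinj.ne h2p
  obtain ⟨β, hβ⟩ : ∃ β, β = (T + r) * (2 : GaloisField p 2)⁻¹ := ⟨_, rfl⟩
  have hroot : β * β - T * β + 1 = 0 := by
    rw [hβ]; field_simp; linear_combination hr'
  -- β is not in the image of ZMod p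
  have hnotin : ∀ z : ZMod p, algebraMap (ZMod p) (GaloisField p 2) z ≠ β := by
    intro z hz
    have hz2 : z * z - t * z + 1 = 0 := by
      apply hinj
      rw [map_add, map_sub, map_mul, map_mul, map_one, map_zero, hz, ← hT, hroot]
    have hz0 : z ≠ 0 := by rintro rfl; simp at hz2
    apply h z hz0
    have hzi : z⁻¹ = t - z := by
      field_simp
      linear_combination hz2
    rw [hzi]; ring
  -- the minimal polynomial of β
  have hdeg : (X ^ 2 - C t * X + 1 : (ZMod p)[X]).natDegree = 2 := by compute_degree!
  have hmon : (X ^ 2 - C t * X + 1 : (ZMod p)[X]).Monic := by monicity!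
  have haev : aeval β (X ^ 2 - C t * X + 1 : (ZMod p)[X]) = 0 := by
    simp only [map_add, map_sub, map_mul, map_pow, map_one, aeval_X, aeval_C]
    rw [pow_two, ← hT]; linear_combination hroot
  have hirr : Irreducible (X ^ 2 - C t * X + 1 : (ZMod p)[X]) := by
    rw [irreducible_iff_roots_eq_zero_of_degree_le_three (by omega) (by omega)]
    by_contra hroots
    obtain ⟨z, hz⟩ := Multiset.exists_mem_of_ne_zero hroots
    rw [mem_roots hmon.ne_zero] at hz
    have hz2 : z * z - t * z + 1 = 0 := by
      have h5 := hz
      simp only [IsRoot, eval_add, eval_sub, eval_mul, eval_pow, eval_X, eval_C, eval_one] at h5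
      linear_combination h5
    have hz0 : z ≠ 0 := by rintro rfl; simp at hz2
    apply h z hz0
    have hzi : z⁻¹ = t - z := by
      field_simp
      linear_combination hz2
    rw [hzi]; ring
  have hmin : minpoly (ZMod p) β = X ^ 2 - C t * X + 1 :=
    (minpoly.eq_of_irreducible_of_monic hirr haev hmon).symm
  -- power basis generated by β
  have li : LinearIndependent (ZMod p) (fun i : Fin 2 => β ^ (i : ℕ)) := by
    have hfam : (fun i : Fin 2 => β ^ (i : ℕ)) = ![1, β] := by
      funext i; fin_cases i <;> simp
    rw [hfam, LinearIndependent.pair_iff' one_ne_zero]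
    intro a ha
    exact hnotin a (by rw [Algebra.algebraMap_eq_smul_one]; exact ha)
  let b := basisOfLinearIndependentOfCardEqFinrank li (by simpa using hfr.symm)
  let pb : PowerBasis (ZMod p) (GaloisField p 2) :=
    ⟨β, 2, b, fun i => by simp [b, coe_basisOfLinearIndependentOfCardEqFinrank]⟩
  have hgen : pb.gen = β := rfl
  have hdim : pb.dim = 2 := rfl
  refine ⟨β, ?_, ?_⟩
  · have hnorm := Algebra.PowerBasis.norm_gen_eq_coeff_zero_minpoly pb
    rw [hgen, hdim, hmin] at hnorm
    rw [hnorm]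
    simp [coeff_one]
  · have htr := PowerBasis.trace_gen_eq_nextCoeff_minpoly pb
    rw [hgen, hmin] at htr
    rw [htr, nextCoeff_of_natDegree_pos (by omega), hdeg]
    simp [coeff_one, coeff_X_pow]

/-- For p > 11 prime, every element of 𝔽_p is the sum of two traces of
norm-one elements of 𝔽_{p²}. -/
theorem Up_add_Up (p : ℕ) [Fact p.Prime] (hp : 11 < p) (s : ZMod p) :
    ∃ u v : ZMod p,
      u ∈ {t : ZMod p | ∃ β : GaloisField p 2,
          Algebra.norm (ZMod p) β = 1 ∧ Algebra.trace (ZMod p) (GaloisField p 2) β = t} ∧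
      v ∈ {t : ZMod p | ∃ β : GaloisField p 2,
          Algebra.norm (ZMod p) β = 1 ∧ Algebra.trace (ZMod p) (GaloisField p 2) β = t} ∧
      u + v = s := by
  classical
  have hfr : Module.finrank (ZMod p) (GaloisField p 2) = 2 := GaloisField.finrank p (by norm_num)
  have hcast : ∀ n : ℕ, 0 < n → n < p → (n : ZMod p) ≠ 0 := by
    intro n h1 h2
    rw [Ne, ZMod.natCast_eq_zero_iff]
    intro hd; have := Nat.le_of_dvd h1 hd; omega
  have h2ne : (2 : ZMod p) ≠ 0 := by
    have := hcast 2 (by norm_num) (by omega); simpa using this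
  have hone_ne_negone : (1 : ZMod p) ≠ -1 := by
    intro hh
    apply h2ne
    linear_combination hh
  have hneg_inv : (-1 : ZMod p)⁻¹ = -1 := by
    exact inv_eq_of_mul_eq_one_right (by ring)
  -- 2 and -2 are in U
  have hmem2 : ∃ β : GaloisField p 2,
      Algebra.norm (ZMod p) β = 1 ∧ Algebra.trace (ZMod p) (GaloisField p 2) β = 2 := by
    refine ⟨1, map_one _, ?_⟩
    have := Algebra.trace_algebraMap (R := ZMod p) (S := GaloisField p 2) 1
    rw [map_one] at this
    rw [this, hfr]
    ring
  have hmemneg2 : ∃ β : GaloisField p 2,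
      Algebra.norm (ZMod p) β = 1 ∧ Algebra.trace (ZMod p) (GaloisField p 2) β = -2 := by
    refine ⟨-1, ?_, ?_⟩
    · have := Algebra.norm_algebraMap (R := ZMod p) (S := GaloisField p 2) (-1)
      rw [map_neg, map_one] at this
      rw [this, hfr]; ring
    · have := Algebra.trace_algebraMap (R := ZMod p) (S := GaloisField p 2) (-1)
      rw [map_neg, map_one] at this
      rw [this, hfr]
      ring
  set U : Finset (ZMod p) := Finset.univ.filter (fun t => ∃ β : GaloisField p 2,
      Algebra.norm (ZMod p) β = 1 ∧ Algebra.trace (ZMod p) (GaloisField p 2) β = t) with hU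
  set S3 : Finset (ZMod p) := Finset.univ.filter (fun z => z ≠ 0 ∧ z ≠ 1 ∧ z ≠ -1) with hS3
  set V : Finset (ZMod p) := S3.image (fun z => z + z⁻¹) with hV
  -- card of S3
  have hS3card : S3.card = p - 3 := by
    have h3 : ({0, 1, -1} : Finset (ZMod p)).card = 3 := by
      rw [Finset.card_insert_of_notMem (by simp [hone_ne_negone, eq_comm]),
        Finset.card_insert_of_notMem (by simp [hone_ne_negone]), Finset.card_singleton]
    have : S3 = Finset.univ \ ({0, 1, -1} : Finset (ZMod p)) := by
      ext z; simp [hS3, and_comm, not_or]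
    rw [this, Finset.card_sdiff_of_subset (Finset.subset_univ _), h3, Finset.card_univ, ZMod.card]
  -- 2 * |V| ≤ |S3|
  have hVcard : 2 * V.card ≤ p - 3 := by
    rw [← hS3card, hV]
    apply Finset.mul_card_image_le_card
    intro b hb
    obtain ⟨z, hzS, hzb⟩ := Finset.mem_image.mp hb
    obtain ⟨z0, z1, zm1⟩ : z ≠ 0 ∧ z ≠ 1 ∧ z ≠ -1 := by simpa [hS3] using hzS
    have hzinvS : z⁻¹ ∈ S3 := by
      simp only [hS3, Finset.mem_filter, Finset.mem_univ, true_and]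
      refine ⟨inv_ne_zero z0, ?_, ?_⟩
      · intro hh; apply z1; rw [← inv_inv z, hh, inv_one]
      · intro hh; apply zm1; rw [← inv_inv z, hh, hneg_inv]
    have hzz : z ≠ z⁻¹ := by
      intro hh
      have hz2 : z * z = 1 := by
        nth_rewrite 2 [hh]
        exact mul_inv_cancel₀ z0
      have : (z - 1) * (z + 1) = 0 := by linear_combination hz2
      rcases mul_eq_zero.mp this with h' | h'
      · exact z1 (by linear_combination h')
      · exact zm1 (by linear_combination h')
    have hsubfib : ({z, z⁻¹} : Finset (ZMod p)) ⊆ S3.filter (fun a => a + a⁻¹ = b) := by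
      intro a ha
      rcases Finset.mem_insert.mp ha with rfl | ha
      · exact Finset.mem_filter.mpr ⟨hzS, hzb⟩
      · rw [Finset.mem_singleton] at ha
        subst ha
        refine Finset.mem_filter.mpr ⟨hzinvS, ?_⟩
        rw [inv_inv, add_comm]
        exact hzb
    calc 2 = ({z, z⁻¹} : Finset (ZMod p)).card := (Finset.card_pair hzz).symm
    _ ≤ _ := Finset.card_le_card hsubfib
  -- complement of U is inside V
  have hUV : ∀ t : ZMod p, t ∉ U → t ∈ V := by
    intro t ht
    have htpred : ¬ ∃ β : GaloisField p 2,
        Algebra.norm (ZMod p) β = 1 ∧ Algebra.trace (ZMod p) (GaloisField p 2) β = t := by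
      intro hh; exact ht (Finset.mem_filter.mpr ⟨Finset.mem_univ _, hh⟩)
    have ht2 : t ≠ 2 := by rintro rfl; exact htpred hmem2
    have htneg2 : t ≠ -2 := by rintro rfl; exact htpred hmemneg2
    have : ¬ ∀ z : ZMod p, z ≠ 0 → z + z⁻¹ ≠ t := fun hh => htpred (memU_of_not p hp t hh)
    push_neg at this
    obtain ⟨z, z0, hz⟩ := this
    have z1 : z ≠ 1 := by
      rintro rfl
      exact ht2 (by rw [← hz, inv_one]; norm_num)
    have zm1 : z ≠ -1 := by
      rintro rfl
      exact htneg2 (by rw [← hz, hneg_inv]; ring)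
    exact Finset.mem_image.mpr ⟨z, by simp [hS3, z0, z1, zm1], hz⟩
  -- |U| is more than half of p
  have hcardU : p + 3 ≤ 2 * U.card := by
    have hsub : (Finset.univ : Finset (ZMod p)) ⊆ U ∪ V := by
      intro t _
      rcases em (t ∈ U) with h' | h'
      · exact Finset.mem_union_left _ h'
      · exact Finset.mem_union_right _ (hUV t h')
    have h1 : p ≤ U.card + V.card := by
      calc p = (Finset.univ : Finset (ZMod p)).card := by rw [Finset.card_univ, ZMod.card]
      _ ≤ (U ∪ V).card := Finset.card_le_card hsub
      _ ≤ U.card + V.card := Finset.card_union_le _ _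
    omega
  -- pigeonhole
  set W : Finset (ZMod p) := U.image (fun u => s - u) with hW
  have hWcard : W.card = U.card := Finset.card_image_of_injective _ sub_right_injective
  have hinter : 0 < (U ∩ W).card := by
    have h1 := Finset.card_inter_add_card_union U W
    have h2 : (U ∪ W).card ≤ p := by
      calc (U ∪ W).card ≤ (Finset.univ : Finset (ZMod p)).card := Finset.card_le_univ _
      _ = p := by rw [Finset.card_univ, ZMod.card]
    omega
  obtain ⟨u, hu⟩ := Finset.card_pos.mp hinter
  rw [Finset.mem_inter] at hu
  obtain ⟨v, hvU, hv⟩ := Finset.mem_image.mp hu.2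
  refine ⟨u, v, ?_, ?_, ?_⟩
  · exact (Finset.mem_filter.mp hu.1).2
  · exact (Finset.mem_filter.mp hvU).2
  · rw [← hv]; ring
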